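/- Let op_N(h) = (op_N(a) - op_N(b))/2 on ℂᴺ with ℓ_x = ℓ_ξ (notation as above). Then F⁻¹ op_N(h) F = -op_N(h), and consequently the spectrum of op_N(h) is symmetric about zero: E ∈ σ(op_N(h)) implies -E ∈ σ(op_N(h)). -/

import Mathlib

set_option maxHeartbeats 1000000

/-- Matrix of op_N(a) = ℓ²/12 + (ℓ²/(2π²))∑_{n≥1}((-1)ⁿ/n²)(T^{n,0}+T^{-n,0}),
with (T^{n,0})_{k,l} = δ_{k+n,l}. -/
noncomputable def opAMat (N : ℕ) [NeZero N] (ℓ : ℝ) : Matrix (ZMod N) (ZMod N) ℂ :=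
  fun k l => ((ℓ^2/12 : ℝ) : ℂ) * (if k = l then 1 else 0)
    + ((ℓ^2/(2*Real.pi^2) : ℝ) : ℂ) * ∑' n : ℕ,
        ((-1 : ℂ)^(n+1) / ((n : ℂ)+1)^2) *
          ((if k + ((n+1 : ℕ) : ZMod N) = l then 1 else 0)
            + (if k - ((n+1 : ℕ) : ZMod N) = l then 1 else 0))

/-- Matrix of op_N(b) = ℓ²/12 + (ℓ²/(2π²))∑_{n≥1}((-1)ⁿ/n²)(T^{0,n}+T^{0,-n}),
with (T^{0,n})_{k,l} = e^{-2πikn/N} δ_{k,l}. -/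
noncomputable def opBMat (N : ℕ) [NeZero N] (ℓ : ℝ) : Matrix (ZMod N) (ZMod N) ℂ :=
  fun k l => (if k = l then
      ((ℓ^2/12 : ℝ) : ℂ) + ((ℓ^2/(2*Real.pi^2) : ℝ) : ℂ) * ∑' n : ℕ,
        ((-1 : ℂ)^(n+1) / ((n : ℂ)+1)^2) *
          (Complex.exp (-(2 * Real.pi * Complex.I * (k.val : ℂ) * ((n : ℂ)+1)) / N)
            + Complex.exp ((2 * Real.pi * Complex.I * (k.val : ℂ) * ((n : ℂ)+1)) / N))
    else 0)

/-- Matrix of the discrete Fourier transform F. -/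
noncomputable def dftMat (N : ℕ) [NeZero N] : Matrix (ZMod N) (ZMod N) ℂ :=
  fun k l => ((Real.sqrt N : ℂ))⁻¹ *
    Complex.exp (-(2 * Real.pi * Complex.I * (k.val : ℂ) * (l.val : ℂ)) / N)

/-- Matrix of op_N(h) = (op_N(a) - op_N(b))/2 with ℓ_x = ℓ_ξ = ℓ. -/
noncomputable def opHMat (N : ℕ) [NeZero N] (ℓ : ℝ) : Matrix (ZMod N) (ZMod N) ℂ :=
  (1/2 : ℂ) • (opAMat N ℓ - opBMat N ℓ)

namespace OpHAux
open Complex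

variable {N : ℕ} [NeZero N]

/-- inverse DFT matrix -/
noncomputable def dftInv (N : ℕ) [NeZero N] : Matrix (ZMod N) (ZMod N) ℂ :=
  fun k l => ((Real.sqrt N : ℂ))⁻¹ *
    Complex.exp ((2 * Real.pi * Complex.I * (k.val : ℂ) * (l.val : ℂ)) / N)

lemma exp_congr_mod (a b : ℤ) (h : (a : ZMod N) = b) (c : ℤ) :
    Complex.exp (2*Real.pi*I*a*c/N) = Complex.exp (2*Real.pi*I*b*c/N) := by
  have hd : (N:ℤ) ∣ a - b := by
    have := (ZMod.intCast_zmod_eq_zero_iff_dvd (a-b) N).mp (by push_cast [h]; ring)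
    exact this
  obtain ⟨t, ht⟩ := hd
  have ha : a = b + N*t := by linarith
  have hN : (N:ℂ) ≠ 0 := Nat.cast_ne_zero.mpr (NeZero.ne N)
  have : (2*(Real.pi:ℂ)*I*a*c/N) = 2*Real.pi*I*b*c/N + (t*c) * (2*Real.pi*I) := by
    rw [ha]; push_cast; field_simp
  rw [this, Complex.exp_add, ← Int.cast_mul, Complex.exp_int_mul_two_pi_mul_I, mul_one]

lemma zmod_sum_exp (m : ℤ) :
    ∑ q : ZMod N, Complex.exp (2*Real.pi*I*q.val*m/N) = if (m : ZMod N) = 0 then (N:ℂ) else 0 := by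
  have hN : (N:ℂ) ≠ 0 := Nat.cast_ne_zero.mpr (NeZero.ne N)
  have hNpos : 0 < N := Nat.pos_of_ne_zero (NeZero.ne N)
  have hterm : ∀ q : ZMod N, Complex.exp (2*Real.pi*I*q.val*m/N)
      = Complex.exp (2*Real.pi*I*m/N) ^ (q.val) := by
    intro q
    rw [← Complex.exp_nat_mul]
    congr 1; ring
  split_ifs with h
  · obtain ⟨t, ht⟩ := (ZMod.intCast_zmod_eq_zero_iff_dvd m N).mp h
    have h1 : ∀ q : ZMod N, Complex.exp (2*Real.pi*I*q.val*m/N) = 1 := by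
      intro q
      have hq : (2*(Real.pi:ℂ)*I*q.val*m/N) = (((q.val : ℤ)*t : ℤ) : ℂ) * (2*Real.pi*I) := by
        rw [ht]; push_cast; field_simp
      rw [hq, Complex.exp_int_mul_two_pi_mul_I]
    rw [Finset.sum_congr rfl (fun q _ => h1 q)]
    simp [Finset.card_univ, ZMod.card]
  · have h2 : (2*(Real.pi:ℂ)*I) ≠ 0 := by
      simp [Real.pi_ne_zero, Complex.I_ne_zero]
    have hx : Complex.exp (2*Real.pi*I*m/N) ≠ 1 := by
      intro hc
      obtain ⟨j, hj⟩ := Complex.exp_eq_one_iff.mp hc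
      apply h
      have h3 : (2*(Real.pi:ℂ)*I) * m = (2*Real.pi*I) * (j*N) := by
        field_simp at hj; linear_combination (2*(Real.pi:ℂ)*I) * hj
      have h4 : (m:ℂ) = ((j * N : ℤ) : ℂ) := by
        push_cast; exact mul_left_cancel₀ h2 h3
      have : m = j * N := by exact_mod_cast h4
      rw [this]; push_cast; simp
    have hre : ∑ q : ZMod N, Complex.exp (2*Real.pi*I*q.val*m/N)
        = ∑ i ∈ Finset.range N, Complex.exp (2*Real.pi*I*m/N) ^ i := by
      refine Finset.sum_nbij' (fun q => q.val) (fun i => (i : ZMod N)) ?_ ?_ ?_ ?_ ?_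
      · intro q _; exact Finset.mem_range.mpr (ZMod.val_lt q)
      · intro i _; exact Finset.mem_univ _
      · intro q _; simp [ZMod.natCast_val, ZMod.cast_id]
      · intro i hi; exact ZMod.val_cast_of_lt (Finset.mem_range.mp hi)
      · intro q _; exact hterm q
    rw [hre, geom_sum_eq hx]
    have hxN : Complex.exp (2*Real.pi*I*m/N) ^ N = 1 := by
      rw [← Complex.exp_nat_mul]
      have he : (N:ℂ) * (2*Real.pi*I*m/N) = m * (2*Real.pi*I) := by field_simp
      rw [he, Complex.exp_int_mul_two_pi_mul_I]
    rw [hxN]; simp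

lemma sqrt_fac : ((Real.sqrt N : ℂ))⁻¹ * ((Real.sqrt N : ℂ))⁻¹ * N = 1 := by
  have hNpos : 0 < (N:ℝ) := by exact_mod_cast Nat.pos_of_ne_zero (NeZero.ne N)
  have hs : Real.sqrt N ≠ 0 := ne_of_gt (Real.sqrt_pos.mpr hNpos)
  have hsc : ((Real.sqrt N : ℝ) : ℂ) ≠ 0 := by exact_mod_cast hs
  have hmm : ((Real.sqrt N : ℝ) : ℂ) * ((Real.sqrt N : ℝ) : ℂ) = (N:ℂ) := by
    rw [← Complex.ofReal_mul, Real.mul_self_sqrt hNpos.le]; norm_cast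
  rw [← hmm]
  field_simp

lemma delta_iff (k l : ZMod N) : ((((k.val:ℤ) - (l.val:ℤ)) : ℤ) : ZMod N) = 0 ↔ k = l := by
  push_cast
  rw [ZMod.natCast_val, ZMod.natCast_val, ZMod.cast_id, ZMod.cast_id, sub_eq_zero]

lemma dftInv_mul_dft : dftInv N * dftMat N = 1 := by
  ext k l
  simp only [Matrix.mul_apply, dftInv, dftMat]
  have hterm : ∀ q : ZMod N,
      ((Real.sqrt N : ℂ))⁻¹ * Complex.exp ((2 * Real.pi * Complex.I * (k.val : ℂ) * (q.val : ℂ)) / N)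
        * (((Real.sqrt N : ℂ))⁻¹ * Complex.exp (-(2 * Real.pi * Complex.I * (q.val : ℂ) * (l.val : ℂ)) / N))
      = ((Real.sqrt N : ℂ))⁻¹ * ((Real.sqrt N : ℂ))⁻¹
        * Complex.exp (2*Real.pi*I*q.val*(((k.val:ℤ) - (l.val:ℤ) : ℤ):ℂ)/N) := by
    intro q
    rw [mul_mul_mul_comm, ← Complex.exp_add]
    congr 1
    push_cast
    ring
  rw [Finset.sum_congr rfl (fun q _ => hterm q), ← Finset.mul_sum, zmod_sum_exp]
  rw [Matrix.one_apply]
  by_cases h : k = l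
  · rw [if_pos ((delta_iff k l).mpr h), if_pos h, sqrt_fac]
  · rw [if_neg (fun hc => h ((delta_iff k l).mp hc)), if_neg h, mul_zero]

lemma dft_mul_dftInv : dftMat N * dftInv N = 1 := by
  ext k l
  simp only [Matrix.mul_apply, dftInv, dftMat]
  have hterm : ∀ q : ZMod N,
      ((Real.sqrt N : ℂ))⁻¹ * Complex.exp (-(2 * Real.pi * Complex.I * (k.val : ℂ) * (q.val : ℂ)) / N)
        * (((Real.sqrt N : ℂ))⁻¹ * Complex.exp ((2 * Real.pi * Complex.I * (q.val : ℂ) * (l.val : ℂ)) / N))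
      = ((Real.sqrt N : ℂ))⁻¹ * ((Real.sqrt N : ℂ))⁻¹
        * Complex.exp (2*Real.pi*I*q.val*(((l.val:ℤ) - (k.val:ℤ) : ℤ):ℂ)/N) := by
    intro q
    rw [mul_mul_mul_comm, ← Complex.exp_add]
    congr 1
    push_cast
    ring
  rw [Finset.sum_congr rfl (fun q _ => hterm q), ← Finset.mul_sum, zmod_sum_exp]
  rw [Matrix.one_apply]
  by_cases h : k = l
  · rw [if_pos ((delta_iff l k).mpr h.symm), if_pos h, sqrt_fac]
  · rw [if_neg (fun hc => h ((delta_iff l k).mp hc).symm), if_neg h, mul_zero]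

/-- row shift -/
lemma dft_shift_row_add (k l : ZMod N) (m : ℕ) :
    dftMat N (k + (m : ZMod N)) l
      = dftMat N k l * Complex.exp (-(2*Real.pi*I*(l.val:ℂ)*(m:ℂ))/N) := by
  have hab : (((-(((k + (m:ZMod N)).val : ℤ))) : ℤ) : ZMod N) = ((-((k.val:ℤ) + m)) : ℤ) := by
    push_cast [ZMod.natCast_val, ZMod.cast_id]
    ring
  have key : Complex.exp (-(2 * Real.pi * Complex.I * (((k + (m:ZMod N)).val : ℕ) : ℂ) * (l.val : ℂ)) / N)
      = Complex.exp (-(2 * Real.pi * Complex.I * (k.val : ℂ) * (l.val : ℂ)) / N)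
          * Complex.exp (-(2*Real.pi*I*(l.val:ℂ)*(m:ℂ))/N) :=
    calc Complex.exp (-(2 * Real.pi * Complex.I * (((k + (m:ZMod N)).val : ℕ) : ℂ) * (l.val : ℂ)) / N)
        = Complex.exp (2*Real.pi*I*(((-(((k + (m:ZMod N)).val : ℤ))):ℤ):ℂ)*(((l.val:ℤ)):ℂ)/N) := by
          congr 1; push_cast; ring
      _ = Complex.exp (2*Real.pi*I*(((-((k.val:ℤ) + m)):ℤ):ℂ)*(((l.val:ℤ)):ℂ)/N) :=
          exp_congr_mod _ _ hab _
      _ = Complex.exp (-(2 * Real.pi * Complex.I * (k.val : ℂ) * (l.val : ℂ)) / N)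
            * Complex.exp (-(2*Real.pi*I*(l.val:ℂ)*(m:ℂ))/N) := by
          rw [← Complex.exp_add]; congr 1; push_cast; ring
  show ((Real.sqrt N : ℂ))⁻¹ * _ = _
  rw [key]; unfold dftMat; ring

lemma dft_shift_row_sub (k l : ZMod N) (m : ℕ) :
    dftMat N (k - (m : ZMod N)) l
      = dftMat N k l * Complex.exp ((2*Real.pi*I*(l.val:ℂ)*(m:ℂ))/N) := by
  have hab : (((-(((k - (m:ZMod N)).val : ℤ))) : ℤ) : ZMod N) = ((-((k.val:ℤ) - m)) : ℤ) := by
    push_cast [ZMod.natCast_val, ZMod.cast_id]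
    ring
  have key : Complex.exp (-(2 * Real.pi * Complex.I * (((k - (m:ZMod N)).val : ℕ) : ℂ) * (l.val : ℂ)) / N)
      = Complex.exp (-(2 * Real.pi * Complex.I * (k.val : ℂ) * (l.val : ℂ)) / N)
          * Complex.exp ((2*Real.pi*I*(l.val:ℂ)*(m:ℂ))/N) :=
    calc Complex.exp (-(2 * Real.pi * Complex.I * (((k - (m:ZMod N)).val : ℕ) : ℂ) * (l.val : ℂ)) / N)
        = Complex.exp (2*Real.pi*I*(((-(((k - (m:ZMod N)).val : ℤ))):ℤ):ℂ)*(((l.val:ℤ)):ℂ)/N) := by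
          congr 1; push_cast; ring
      _ = Complex.exp (2*Real.pi*I*(((-((k.val:ℤ) - m)):ℤ):ℂ)*(((l.val:ℤ)):ℂ)/N) :=
          exp_congr_mod _ _ hab _
      _ = Complex.exp (-(2 * Real.pi * Complex.I * (k.val : ℂ) * (l.val : ℂ)) / N)
            * Complex.exp ((2*Real.pi*I*(l.val:ℂ)*(m:ℂ))/N) := by
          rw [← Complex.exp_add]; congr 1; push_cast; ring
  show ((Real.sqrt N : ℂ))⁻¹ * _ = _
  rw [key]; unfold dftMat; ring

lemma dft_symm (k l : ZMod N) : dftMat N k l = dftMat N l k := by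
  unfold dftMat; congr 2; ring

lemma dft_shift_col_add (k l : ZMod N) (m : ℕ) :
    dftMat N k (l + (m : ZMod N))
      = dftMat N k l * Complex.exp (-(2*Real.pi*I*(k.val:ℂ)*(m:ℂ))/N) := by
  rw [dft_symm, dft_shift_row_add, dft_symm l k]

lemma dft_shift_col_sub (k l : ZMod N) (m : ℕ) :
    dftMat N k (l - (m : ZMod N))
      = dftMat N k l * Complex.exp ((2*Real.pi*I*(k.val:ℂ)*(m:ℂ))/N) := by
  rw [dft_symm, dft_shift_row_sub, dft_symm l k]

/-- summability helper -/
lemma summable_w (g : ℕ → ℂ) (C : ℝ) (hg : ∀ n, ‖g n‖ ≤ C) :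
    Summable (fun n : ℕ => ((-1:ℂ)^(n+1) / ((n:ℂ)+1)^2) * g n) := by
  apply Summable.of_norm
  have hb : ∀ n : ℕ, ‖((-1:ℂ)^(n+1) / ((n:ℂ)+1)^2) * g n‖ ≤ (1/((n:ℝ)+1)^2) * C := by
    intro n
    rw [norm_mul, norm_div, norm_pow, norm_neg, norm_one, one_pow]
    have h1 : ‖(((n:ℂ))+1)^2‖ = ((n:ℝ)+1)^2 := by
      rw [norm_pow]
      congr 1
      have : ((n:ℂ)+1) = (((n+1:ℕ)):ℂ) := by push_cast; ring
      rw [this, Complex.norm_natCast]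
      push_cast; ring
    rw [h1, one_div]
    exact mul_le_mul (le_refl _) (hg n) (norm_nonneg _) (by positivity)
  apply Summable.of_nonneg_of_le (fun n => norm_nonneg _) hb
  apply Summable.mul_right
  have : Summable (fun n : ℕ => 1 / ((n:ℝ))^2) := Real.summable_one_div_nat_pow.mpr one_lt_two
  have h2 := (summable_nat_add_iff 1).mpr this
  refine h2.congr fun n => ?_
  push_cast; ring

lemma norm_two_ite (P Q : Prop) [Decidable P] [Decidable Q] (z : ℂ) (hz : ‖z‖ ≤ 1) :
    ‖(((if P then (1:ℂ) else 0) + (if Q then (1:ℂ) else 0)) * z)‖ ≤ 2 := by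
  rw [norm_mul]
  have h1 : ‖((if P then (1:ℂ) else 0) + (if Q then (1:ℂ) else 0))‖ ≤ 2 := by
    refine (norm_add_le _ _).trans ?_
    have : ∀ (R : Prop) [Decidable R], ‖(if R then (1:ℂ) else 0)‖ ≤ 1 := by
      intro R _; split <;> simp
    linarith [this P, this Q]
  calc ‖((if P then (1:ℂ) else 0) + (if Q then (1:ℂ) else 0))‖ * ‖z‖
      ≤ 2 * 1 := mul_le_mul h1 hz (norm_nonneg _) (by norm_num)
    _ = 2 := by norm_num

variable (ℓ : ℝ)

lemma AF_eq_FB : opAMat N ℓ * dftMat N = dftMat N * opBMat N ℓ := by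
  have hN : (N:ℂ) ≠ 0 := Nat.cast_ne_zero.mpr (NeZero.ne N)
  ext k l
  rw [Matrix.mul_apply, Matrix.mul_apply]
  -- RHS: diagonal matrix
  have hR : ∑ q : ZMod N, dftMat N k q * opBMat N ℓ q l
      = dftMat N k l * (((ℓ^2/12 : ℝ) : ℂ)
          + ((ℓ^2/(2*Real.pi^2) : ℝ) : ℂ) * ∑' n : ℕ,
        ((-1 : ℂ)^(n+1) / ((n : ℂ)+1)^2) *
          (Complex.exp (-(2 * Real.pi * Complex.I * (l.val : ℂ) * ((n : ℂ)+1)) / N)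
            + Complex.exp ((2 * Real.pi * Complex.I * (l.val : ℂ) * ((n : ℂ)+1)) / N))) := by
    have : ∀ q : ZMod N, dftMat N k q * opBMat N ℓ q l
        = if q = l then dftMat N k q * (((ℓ^2/12 : ℝ) : ℂ)
          + ((ℓ^2/(2*Real.pi^2) : ℝ) : ℂ) * ∑' n : ℕ,
        ((-1 : ℂ)^(n+1) / ((n : ℂ)+1)^2) *
          (Complex.exp (-(2 * Real.pi * Complex.I * (q.val : ℂ) * ((n : ℂ)+1)) / N)
            + Complex.exp ((2 * Real.pi * Complex.I * (q.val : ℂ) * ((n : ℂ)+1)) / N))) else 0 := by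
      intro q
      unfold opBMat
      split <;> simp
    rw [Finset.sum_congr rfl (fun q _ => this q), Finset.sum_ite_eq']
    simp
  rw [hR]
  -- LHS
  have hL : ∀ q : ZMod N, opAMat N ℓ q l = opAMat N ℓ q l := fun _ => rfl
  have hterm : ∀ q : ZMod N, opAMat N ℓ k q * dftMat N q l
      = ((ℓ^2/12 : ℝ) : ℂ) * ((if k = q then 1 else 0) * dftMat N q l)
        + ((ℓ^2/(2*Real.pi^2) : ℝ) : ℂ) * ∑' n : ℕ,
            ((-1 : ℂ)^(n+1) / ((n : ℂ)+1)^2) *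
              (((if k + ((n+1 : ℕ) : ZMod N) = q then 1 else 0)
                + (if k - ((n+1 : ℕ) : ZMod N) = q then 1 else 0)) * dftMat N q l) := by
    intro q
    unfold opAMat
    rw [add_mul, mul_assoc, mul_assoc, ← tsum_mul_right]
    congr 2
    exact tsum_congr fun n => by ring
  rw [Finset.sum_congr rfl (fun q _ => hterm q)]
  rw [Finset.sum_add_distrib, ← Finset.mul_sum, ← Finset.mul_sum]
  have hδ : ∑ q : ZMod N, (if k = q then (1:ℂ) else 0) * dftMat N q l = dftMat N k l := by
    simp only [ite_mul, one_mul, zero_mul]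
    rw [Finset.sum_ite_eq]
    simp
  rw [hδ]
  -- swap finite sum and tsum
  have hswap : ∑ q : ZMod N, ∑' n : ℕ,
      ((-1 : ℂ)^(n+1) / ((n : ℂ)+1)^2) *
        (((if k + ((n+1 : ℕ) : ZMod N) = q then 1 else 0)
            + (if k - ((n+1 : ℕ) : ZMod N) = q then 1 else 0)) * dftMat N q l)
      = ∑' n : ℕ, ∑ q : ZMod N,
      ((-1 : ℂ)^(n+1) / ((n : ℂ)+1)^2) *
        (((if k + ((n+1 : ℕ) : ZMod N) = q then 1 else 0)
            + (if k - ((n+1 : ℕ) : ZMod N) = q then 1 else 0)) * dftMat N q l) := by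
    refine (Summable.tsum_finsetSum ?_).symm
    intro q _
    refine summable_w _ (2 * ‖dftMat N q l‖) fun n => ?_
    have h0 : ‖dftMat N q l‖ ≤ ‖dftMat N q l‖ := le_refl _
    calc ‖(((if k + ((n+1 : ℕ) : ZMod N) = q then (1:ℂ) else 0)
            + (if k - ((n+1 : ℕ) : ZMod N) = q then 1 else 0)) * dftMat N q l)‖
        ≤ (1 + 1) * ‖dftMat N q l‖ := by
          rw [norm_mul]
          refine mul_le_mul ?_ h0 (norm_nonneg _) (by norm_num)
          refine (norm_add_le _ _).trans ?_
          have : ∀ (R : Prop) [Decidable R], ‖(if R then (1:ℂ) else 0)‖ ≤ 1 := by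
            intro R _; split <;> simp
          linarith [this (k + ((n+1 : ℕ) : ZMod N) = q), this (k - ((n+1 : ℕ) : ZMod N) = q)]
      _ = 2 * ‖dftMat N q l‖ := by norm_num
  rw [hswap]
  -- now per-n computations
  have hmid : (∑' n : ℕ, ∑ q : ZMod N,
      ((-1 : ℂ)^(n+1) / ((n : ℂ)+1)^2) *
        (((if k + ((n+1 : ℕ) : ZMod N) = q then 1 else 0)
            + (if k - ((n+1 : ℕ) : ZMod N) = q then 1 else 0)) * dftMat N q l))
      = ∑' n : ℕ, (((-1 : ℂ)^(n+1) / ((n : ℂ)+1)^2) *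
          (Complex.exp (-(2 * Real.pi * Complex.I * (l.val : ℂ) * ((n : ℂ)+1)) / N)
            + Complex.exp ((2 * Real.pi * Complex.I * (l.val : ℂ) * ((n : ℂ)+1)) / N)))
          * dftMat N k l := by
    refine tsum_congr fun n => ?_
    have hq1 : ∑ q : ZMod N, ((-1 : ℂ)^(n+1) / ((n : ℂ)+1)^2) *
          (((if k + ((n+1 : ℕ) : ZMod N) = q then 1 else 0)
              + (if k - ((n+1 : ℕ) : ZMod N) = q then 1 else 0)) * dftMat N q l)
        = ((-1 : ℂ)^(n+1) / ((n : ℂ)+1)^2) *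
            (dftMat N (k + ((n+1 : ℕ) : ZMod N)) l + dftMat N (k - ((n+1 : ℕ) : ZMod N)) l) := by
      rw [← Finset.mul_sum]
      congr 1
      have hsplit : ∀ q : ZMod N, (((if k + ((n+1 : ℕ) : ZMod N) = q then (1:ℂ) else 0)
              + (if k - ((n+1 : ℕ) : ZMod N) = q then 1 else 0)) * dftMat N q l)
          = (if k + ((n+1 : ℕ) : ZMod N) = q then dftMat N q l else 0)
            + (if k - ((n+1 : ℕ) : ZMod N) = q then dftMat N q l else 0) := by
        intro q
        split <;> split <;> ring
      rw [Finset.sum_congr rfl (fun q _ => hsplit q), Finset.sum_add_distrib,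
        Finset.sum_ite_eq, Finset.sum_ite_eq]
      simp
    rw [hq1, dft_shift_row_add, dft_shift_row_sub]
    have e1 : Complex.exp (-(2*Real.pi*I*(l.val:ℂ)*(((n+1:ℕ)):ℂ))/N)
        = Complex.exp (-(2 * Real.pi * Complex.I * (l.val : ℂ) * ((n : ℂ)+1)) / N) := by
      congr 1; push_cast; ring
    have e2 : Complex.exp ((2*Real.pi*I*(l.val:ℂ)*(((n+1:ℕ)):ℂ))/N)
        = Complex.exp ((2 * Real.pi * Complex.I * (l.val : ℂ) * ((n : ℂ)+1)) / N) := by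
      congr 1; push_cast; ring
    rw [e1, e2]
    ring
  rw [hmid, tsum_mul_right]
  ring

lemma BF_eq_FA : opBMat N ℓ * dftMat N = dftMat N * opAMat N ℓ := by
  have hN : (N:ℂ) ≠ 0 := Nat.cast_ne_zero.mpr (NeZero.ne N)
  ext k l
  rw [Matrix.mul_apply, Matrix.mul_apply]
  -- LHS: diagonal
  have hLdiag : ∑ q : ZMod N, opBMat N ℓ k q * dftMat N q l
      = (((ℓ^2/12 : ℝ) : ℂ)
          + ((ℓ^2/(2*Real.pi^2) : ℝ) : ℂ) * ∑' n : ℕ,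
        ((-1 : ℂ)^(n+1) / ((n : ℂ)+1)^2) *
          (Complex.exp (-(2 * Real.pi * Complex.I * (k.val : ℂ) * ((n : ℂ)+1)) / N)
            + Complex.exp ((2 * Real.pi * Complex.I * (k.val : ℂ) * ((n : ℂ)+1)) / N)))
        * dftMat N k l := by
    have : ∀ q : ZMod N, opBMat N ℓ k q * dftMat N q l
        = if k = q then (((ℓ^2/12 : ℝ) : ℂ)
          + ((ℓ^2/(2*Real.pi^2) : ℝ) : ℂ) * ∑' n : ℕ,
        ((-1 : ℂ)^(n+1) / ((n : ℂ)+1)^2) *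
          (Complex.exp (-(2 * Real.pi * Complex.I * (k.val : ℂ) * ((n : ℂ)+1)) / N)
            + Complex.exp ((2 * Real.pi * Complex.I * (k.val : ℂ) * ((n : ℂ)+1)) / N)))
          * dftMat N q l else 0 := by
      intro q
      unfold opBMat
      split <;> simp
    rw [Finset.sum_congr rfl (fun q _ => this q), Finset.sum_ite_eq]
    simp
  rw [hLdiag]
  -- RHS
  have hterm : ∀ q : ZMod N, dftMat N k q * opAMat N ℓ q l
      = ((ℓ^2/12 : ℝ) : ℂ) * ((if q = l then 1 else 0) * dftMat N k q)
        + ((ℓ^2/(2*Real.pi^2) : ℝ) : ℂ) * ∑' n : ℕ,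
            ((-1 : ℂ)^(n+1) / ((n : ℂ)+1)^2) *
              (((if q + ((n+1 : ℕ) : ZMod N) = l then 1 else 0)
                + (if q - ((n+1 : ℕ) : ZMod N) = l then 1 else 0)) * dftMat N k q) := by
    intro q
    unfold opAMat
    rw [mul_add]
    congr 1
    · ring
    rw [mul_comm (dftMat N k q), mul_assoc, ← tsum_mul_right]
    congr 1
    exact tsum_congr fun n => by ring
  rw [Finset.sum_congr rfl (fun q _ => hterm q)]
  rw [Finset.sum_add_distrib, ← Finset.mul_sum, ← Finset.mul_sum]
  have hδ : ∑ q : ZMod N, (if q = l then (1:ℂ) else 0) * dftMat N k q = dftMat N k l := by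
    simp only [ite_mul, one_mul, zero_mul]
    rw [Finset.sum_ite_eq']
    simp
  rw [hδ]
  have hswap : ∑ q : ZMod N, ∑' n : ℕ,
      ((-1 : ℂ)^(n+1) / ((n : ℂ)+1)^2) *
        (((if q + ((n+1 : ℕ) : ZMod N) = l then 1 else 0)
            + (if q - ((n+1 : ℕ) : ZMod N) = l then 1 else 0)) * dftMat N k q)
      = ∑' n : ℕ, ∑ q : ZMod N,
      ((-1 : ℂ)^(n+1) / ((n : ℂ)+1)^2) *
        (((if q + ((n+1 : ℕ) : ZMod N) = l then 1 else 0)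
            + (if q - ((n+1 : ℕ) : ZMod N) = l then 1 else 0)) * dftMat N k q) := by
    refine (Summable.tsum_finsetSum ?_).symm
    intro q _
    refine summable_w _ (2 * ‖dftMat N k q‖) fun n => ?_
    calc ‖(((if q + ((n+1 : ℕ) : ZMod N) = l then (1:ℂ) else 0)
            + (if q - ((n+1 : ℕ) : ZMod N) = l then 1 else 0)) * dftMat N k q)‖
        ≤ (1 + 1) * ‖dftMat N k q‖ := by
          rw [norm_mul]
          refine mul_le_mul ?_ (le_refl _) (norm_nonneg _) (by norm_num)
          refine (norm_add_le _ _).trans ?_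
          have : ∀ (R : Prop) [Decidable R], ‖(if R then (1:ℂ) else 0)‖ ≤ 1 := by
            intro R _; split <;> simp
          linarith [this (q + ((n+1 : ℕ) : ZMod N) = l), this (q - ((n+1 : ℕ) : ZMod N) = l)]
      _ = 2 * ‖dftMat N k q‖ := by norm_num
  rw [hswap]
  have hmid : (∑' n : ℕ, ∑ q : ZMod N,
      ((-1 : ℂ)^(n+1) / ((n : ℂ)+1)^2) *
        (((if q + ((n+1 : ℕ) : ZMod N) = l then 1 else 0)
            + (if q - ((n+1 : ℕ) : ZMod N) = l then 1 else 0)) * dftMat N k q))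
      = ∑' n : ℕ, (((-1 : ℂ)^(n+1) / ((n : ℂ)+1)^2) *
          (Complex.exp (-(2 * Real.pi * Complex.I * (k.val : ℂ) * ((n : ℂ)+1)) / N)
            + Complex.exp ((2 * Real.pi * Complex.I * (k.val : ℂ) * ((n : ℂ)+1)) / N)))
          * dftMat N k l := by
    refine tsum_congr fun n => ?_
    have hc1 : ∀ q : ZMod N, (q + ((n+1 : ℕ) : ZMod N) = l) ↔ (q = l - ((n+1 : ℕ) : ZMod N)) := by
      intro q
      constructor
      · intro h; exact eq_sub_of_add_eq h
      · intro h; rw [h]; ring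
    have hc2 : ∀ q : ZMod N, (q - ((n+1 : ℕ) : ZMod N) = l) ↔ (q = l + ((n+1 : ℕ) : ZMod N)) := by
      intro q
      constructor
      · intro h; exact eq_add_of_sub_eq h
      · intro h; rw [h]; ring
    have hq1 : ∑ q : ZMod N, ((-1 : ℂ)^(n+1) / ((n : ℂ)+1)^2) *
          (((if q + ((n+1 : ℕ) : ZMod N) = l then 1 else 0)
              + (if q - ((n+1 : ℕ) : ZMod N) = l then 1 else 0)) * dftMat N k q)
        = ((-1 : ℂ)^(n+1) / ((n : ℂ)+1)^2) *
            (dftMat N k (l - ((n+1 : ℕ) : ZMod N)) + dftMat N k (l + ((n+1 : ℕ) : ZMod N))) := by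
      rw [← Finset.mul_sum]
      congr 1
      have hsplit : ∀ q : ZMod N, (((if q + ((n+1 : ℕ) : ZMod N) = l then (1:ℂ) else 0)
              + (if q - ((n+1 : ℕ) : ZMod N) = l then 1 else 0)) * dftMat N k q)
          = (if q = l - ((n+1 : ℕ) : ZMod N) then dftMat N k q else 0)
            + (if q = l + ((n+1 : ℕ) : ZMod N) then dftMat N k q else 0) := by
        intro q
        simp only [hc1 q, hc2 q, add_mul, ite_mul, one_mul, zero_mul]
      rw [Finset.sum_congr rfl (fun q _ => hsplit q), Finset.sum_add_distrib,
        Finset.sum_ite_eq', Finset.sum_ite_eq']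
      simp
    rw [hq1, dft_shift_col_sub, dft_shift_col_add]
    have e1 : Complex.exp (-(2*Real.pi*I*(k.val:ℂ)*(((n+1:ℕ)):ℂ))/N)
        = Complex.exp (-(2 * Real.pi * Complex.I * (k.val : ℂ) * ((n : ℂ)+1)) / N) := by
      congr 1; push_cast; ring
    have e2 : Complex.exp ((2*Real.pi*I*(k.val:ℂ)*(((n+1:ℕ)):ℂ))/N)
        = Complex.exp ((2 * Real.pi * Complex.I * (k.val : ℂ) * ((n : ℂ)+1)) / N) := by
      congr 1; push_cast; ring
    rw [e1, e2]
    ring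
  rw [hmid, tsum_mul_right]
  ring

end OpHAux

/-- F⁻¹ op_N(h) F = -op_N(h), and hence the spectrum of op_N(h) is
symmetric about zero. -/
theorem dft_conj_opH_and_spectrum_symm (N : ℕ) [NeZero N] (ℓ : ℝ) (hℓ : 0 < ℓ) :
    (dftMat N)⁻¹ * opHMat N ℓ * dftMat N = -opHMat N ℓ
    ∧ ∀ E : ℂ, E ∈ spectrum ℂ (opHMat N ℓ) → -E ∈ spectrum ℂ (opHMat N ℓ) := by
  have hAF := OpHAux.AF_eq_FB (N := N) ℓ
  have hBF := OpHAux.BF_eq_FA (N := N) ℓ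
  have hinv : (dftMat N)⁻¹ = OpHAux.dftInv N :=
    Matrix.inv_eq_left_inv OpHAux.dftInv_mul_dft
  have hHF : opHMat N ℓ * dftMat N = dftMat N * (-opHMat N ℓ) := by
    unfold opHMat
    rw [Matrix.smul_mul, Matrix.sub_mul, hAF, hBF, mul_neg, Matrix.mul_smul,
      Matrix.mul_sub, smul_sub]
    rw [smul_sub, neg_sub]
  have h1 : (dftMat N)⁻¹ * opHMat N ℓ * dftMat N = -opHMat N ℓ := by
    calc (dftMat N)⁻¹ * opHMat N ℓ * dftMat N
        = (dftMat N)⁻¹ * (opHMat N ℓ * dftMat N) := by rw [Matrix.mul_assoc]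
      _ = (dftMat N)⁻¹ * (dftMat N * (-opHMat N ℓ)) := by rw [hHF]
      _ = ((dftMat N)⁻¹ * dftMat N) * (-opHMat N ℓ) := by rw [Matrix.mul_assoc]
      _ = -opHMat N ℓ := by rw [hinv, OpHAux.dftInv_mul_dft, Matrix.one_mul]
  refine ⟨h1, fun E hE => ?_⟩
  let u : (Matrix (ZMod N) (ZMod N) ℂ)ˣ :=
    ⟨dftMat N, OpHAux.dftInv N, OpHAux.dft_mul_dftInv, OpHAux.dftInv_mul_dft⟩
  have hspec : spectrum ℂ (-opHMat N ℓ) = spectrum ℂ (opHMat N ℓ) := by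
    rw [← h1, hinv]
    exact spectrum.units_conjugate' (u := u)
  have hneg : -E ∈ spectrum ℂ (-opHMat N ℓ) := by
    rw [← spectrum.neg_eq]
    exact Set.neg_mem_neg.mpr hE
  rwa [hspec] at hneg
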